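/- Let Γ be a finite N-player game, a* a strict Nash equilibrium of Γ with minimum payoff margin c > 0, and fix a constant friction coefficient r > 0. Let y : [0, ∞) → ∏_i ℝ^{A_i} be twice differentiable and solve the constant-friction accelerated dynamics with logit best responses: for every player i, every a ∈ A_i and every t ≥ 0, ÿ_{i,a}(t) = v_{i,a}(Λ(y(t))) − r·ẏ_{i,a}(t), with ẏ(0) = 0, and set x(t) = Λ(y(t)). Then there exists M > 0, depending only on Γ and a*, such that whenever y_{i,a}(0) − y_{i,a*_i}(0) < −M for every player i and every action a ≠ a*_i, the trajectory x(t) converges to x* as t → ∞, and there is a constant C > 0 depending only on the initialization such that ‖x(t) − x*‖∞ ≤ exp(C − (c/r)t − (c/r²)e^{−rt} + c/r²) for all t ≥ 0. -/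

import Mathlib

open Filter

/-- The logit (softmax) choice map. -/
noncomputable def logit {α : Type*} [Fintype α] (y : α → ℝ) : α → ℝ :=
  fun a => Real.exp (y a) / ∑ b, Real.exp (y b)

/-- Mixed extension of a payoff function: `∑_a (∏_j x_j(a_j)) u(a)`. -/
def mixedPayoff {N : ℕ} {A : Fin N → Type*} [∀ j, Fintype (A j)]
    (ui : (∀ j, A j) → ℝ) (x : ∀ j, A j → ℝ) : ℝ :=
  ∑ a : ∀ j, A j, (∏ j, x j (a j)) * ui a

/-- Payoff vector `v_{i,aᵢ}(x) = u_i(aᵢ ; x₋ᵢ)`: player `i` plays the point mass at `aᵢ`. -/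
def payVec {N : ℕ} {A : Fin N → Type*} [∀ j, Fintype (A j)] [∀ j, DecidableEq (A j)]
    (u : ∀ _ : Fin N, (∀ j, A j) → ℝ) (i : Fin N) (ai : A i) (x : ∀ j, A j → ℝ) : ℝ :=
  mixedPayoff (u i) (Function.update x i (fun b => if b = ai then (1 : ℝ) else 0))

open Set

section FTXLHelpers

lemma ftxl_key (c r : ℝ) (hc : 0 < c) (hr : 0 < r) (z z' z'' g : ℝ → ℝ)
    (hz : ∀ t ≥ (0:ℝ), HasDerivAt z (z' t) t)
    (hz' : ∀ t ≥ (0:ℝ), HasDerivAt z' (z'' t) t)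
    (hode : ∀ t ≥ (0:ℝ), z'' t = g t - r * z' t)
    (h0 : z' 0 = 0)
    (T : ℝ) (hT : 0 ≤ T) (hg : ∀ t ∈ Icc (0:ℝ) T, g t ≤ -c) :
    ∀ t ∈ Icc (0:ℝ) T,
      z t ≤ z 0 - (c / r) * t - (c / r ^ 2) * Real.exp (-r * t) + c / r ^ 2 := by
  -- step A
  set h : ℝ → ℝ := fun t => Real.exp (r * t) * z' t + (c / r) * (Real.exp (r * t) - 1) with hh
  have hder : ∀ t ≥ (0:ℝ), HasDerivAt h (Real.exp (r * t) * (g t + c)) t := by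
    intro t ht
    have e1 : HasDerivAt (fun s => Real.exp (r * s)) (Real.exp (r * t) * r) t :=
      (Real.hasDerivAt_exp (r * t)).comp t ((hasDerivAt_id t).const_mul r) |>.congr_deriv (by ring)
    have := (e1.mul (hz' t ht)).add (((e1.sub_const 1).const_mul (c / r)))
    refine this.congr_deriv ?_
    rw [hode t ht]
    field_simp
    ring
  have hA : ∀ t ∈ Icc (0:ℝ) T, h t ≤ 0 := by
    have hanti : AntitoneOn h (Icc (0:ℝ) T) := by
      apply antitoneOn_of_hasDerivWithinAt_nonpos (convex_Icc 0 T)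
        (f' := fun t => Real.exp (r * t) * (g t + c))
      · intro t ht
        exact (hder t ht.1).continuousAt.continuousWithinAt
      · intro t ht
        rw [interior_Icc] at ht
        exact (hder t ht.1.le).hasDerivWithinAt
      · intro t ht
        rw [interior_Icc] at ht
        have := hg t ⟨ht.1.le, ht.2.le⟩
        have he := Real.exp_pos (r * t)
        nlinarith
    intro t ht
    have := hanti (left_mem_Icc.2 hT) ht ht.1
    simpa [hh, h0] using this
  have hA' : ∀ t ∈ Icc (0:ℝ) T, z' t + c / r - (c / r) * Real.exp (-r * t) ≤ 0 := by
    intro t ht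
    have h1 := hA t ht
    have hE : (0:ℝ) < Real.exp (r * t) := Real.exp_pos _
    have hneg : Real.exp (-r * t) = (Real.exp (r * t))⁻¹ := by
      rw [← Real.exp_neg]; ring_nf
    rw [hh] at h1
    simp only [] at h1
    have h2 : z' t ≤ ((c / r) * (1 - Real.exp (r * t))) / Real.exp (r * t) := by
      rw [le_div_iff₀ hE]; nlinarith
    have h3 : ((c / r) * (1 - Real.exp (r * t))) / Real.exp (r * t)
        = (c / r) * (Real.exp (r * t))⁻¹ - c / r := by
      field_simp
    rw [h3] at h2
    rw [hneg]
    linarith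
  -- step B
  set φ : ℝ → ℝ := fun t => z t - z 0 + (c / r) * t + (c / r ^ 2) * Real.exp (-r * t) - c / r ^ 2
    with hφ
  have hφder : ∀ t ≥ (0:ℝ), HasDerivAt φ (z' t + c / r - (c / r) * Real.exp (-r * t)) t := by
    intro t ht
    have e1 : HasDerivAt (fun s => Real.exp (-r * s)) (Real.exp (-r * t) * (-r)) t :=
      (Real.hasDerivAt_exp (-r * t)).comp t ((hasDerivAt_id t).const_mul (-r)) |>.congr_deriv
        (by ring)
    have := ((((hz t ht).sub_const (z 0)).add ((hasDerivAt_id t).const_mul (c / r))).add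
      (e1.const_mul (c / r ^ 2))).sub_const (c / r ^ 2)
    refine this.congr_deriv ?_
    field_simp
    ring
  have hB : AntitoneOn φ (Icc (0:ℝ) T) := by
    apply antitoneOn_of_hasDerivWithinAt_nonpos (convex_Icc 0 T)
      (f' := fun t => z' t + c / r - (c / r) * Real.exp (-r * t))
    · intro t ht
      exact (hφder t ht.1).continuousAt.continuousWithinAt
    · intro t ht
      rw [interior_Icc] at ht
      exact (hφder t ht.1.le).hasDerivWithinAt
    · intro t ht
      rw [interior_Icc] at ht
      exact hA' t ⟨ht.1.le, ht.2.le⟩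
  intro t ht
  have := hB (left_mem_Icc.2 hT) ht ht.1
  have h0' : φ 0 = 0 := by simp [hφ]
  rw [h0'] at this
  rw [hφ] at this
  simp only [] at this
  linarith

lemma ftxl_logit_close {α : Type*} [Fintype α] [DecidableEq α] (w : α → ℝ) (astar b : α) :
    |logit w b - (if b = astar then 1 else 0)| ≤
      ∑ b' ∈ Finset.univ.erase astar, Real.exp (w b' - w astar) := by
  have hD : (0:ℝ) < ∑ b', Real.exp (w b') :=
    Finset.sum_pos (fun b' _ => Real.exp_pos _) ⟨b, Finset.mem_univ b⟩
  have hle : ∀ b' : α, logit w b' ≤ Real.exp (w b' - w astar) := by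
    intro b'
    rw [Real.exp_sub, logit]
    apply div_le_div_of_nonneg_left (Real.exp_pos _).le (Real.exp_pos _)
    exact Finset.single_le_sum (fun i _ => (Real.exp_pos (w i)).le) (Finset.mem_univ astar)
  have hnn : ∀ b' : α, 0 ≤ logit w b' := fun b' =>
    div_nonneg (Real.exp_pos _).le hD.le
  have hsum : ∑ b', logit w b' = 1 := by
    simp only [logit, ← Finset.sum_div]
    exact div_self hD.ne'
  by_cases hb : b = astar
  · subst hb
    rw [if_pos rfl]
    have h1 : logit w b ≤ 1 := by
      rw [← hsum]
      exact Finset.single_le_sum (fun i _ => hnn i) (Finset.mem_univ b)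
    rw [abs_of_nonpos (by linarith)]
    have : 1 - logit w b = ∑ b' ∈ Finset.univ.erase b, logit w b' := by
      rw [← hsum, ← Finset.sum_erase_add Finset.univ _ (Finset.mem_univ b)]
      ring
    rw [neg_sub, this]
    exact Finset.sum_le_sum fun b' _ => hle b'
  · simp only [if_neg hb]
    rw [sub_zero, abs_of_nonneg (hnn b)]
    calc logit w b ≤ Real.exp (w b - w astar) := hle b
      _ ≤ _ := Finset.single_le_sum (f := fun b' => Real.exp (w b' - w astar))
          (fun i _ => (Real.exp_pos _).le) (Finset.mem_erase.2 ⟨hb, Finset.mem_univ b⟩)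


lemma ftxl_mixed_pure {N : ℕ} {A : Fin N → Type*} [∀ j, Fintype (A j)] [∀ j, DecidableEq (A j)]
    (ui : (∀ j, A j) → ℝ) (cfun : ∀ j, A j) :
    mixedPayoff ui (fun j b => if b = cfun j then (1:ℝ) else 0) = ui cfun := by
  rw [mixedPayoff]
  rw [Fintype.sum_eq_single cfun]
  · simp
  · intro a ha
    have : ∃ j, a j ≠ cfun j := by
      by_contra h
      push_neg at h
      exact ha (funext h)
    obtain ⟨j, hj⟩ := this
    rw [Finset.prod_eq_zero (Finset.mem_univ j) (by simp [hj]), zero_mul]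


lemma ftxl_payVec_pure {N : ℕ} {A : Fin N → Type*} [∀ j, Fintype (A j)] [∀ j, DecidableEq (A j)]
    (u : ∀ _ : Fin N, (∀ j, A j) → ℝ) (i : Fin N) (b : A i) (aStar : ∀ j, A j) :
    payVec u i b (fun j b' => if b' = aStar j then (1:ℝ) else 0)
      = u i (Function.update aStar i b) := by
  rw [payVec]
  have : Function.update (fun j b' => if b' = aStar j then (1:ℝ) else 0) i
      (fun b' => if b' = b then (1:ℝ) else 0)
      = fun j b' => if b' = Function.update aStar i b j then (1:ℝ) else 0 := by
    funext j b'
    rcases eq_or_ne j i with rfl | h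
    · simp
    · simp [Function.update_of_ne h]
  rw [this, ftxl_mixed_pure]


lemma ftxl_payVec_cont {N : ℕ} {A : Fin N → Type*} [∀ j, Fintype (A j)] [∀ j, DecidableEq (A j)]
    (u : ∀ _ : Fin N, (∀ j, A j) → ℝ) (i : Fin N) (b : A i) :
    Continuous fun x : ∀ j, A j → ℝ => payVec u i b x := by
  have h1 : Continuous fun w : ∀ j, A j → ℝ => mixedPayoff (u i) w := by
    unfold mixedPayoff
    exact continuous_finset_sum _ fun a _ =>
      (continuous_finset_prod _ fun j _ =>
        (continuous_apply (a j)).comp (continuous_apply j)).mul continuous_const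
  exact h1.comp ((continuous_id.update i continuous_const))

end FTXLHelpers

/-- Convergence of the continuous-time accelerated dynamics with
constant friction `r` and logit best responses to a strict Nash equilibrium,
at a linear rate `exp(C - (c/r)t - (c/r²)e^{-rt} + c/r²)`. -/
theorem ftxl_continuous_constant_friction
    {N : ℕ} {A : Fin N → Type*} [∀ j, Fintype (A j)] [∀ j, Nonempty (A j)]
    [∀ j, DecidableEq (A j)]
    (u : ∀ _ : Fin N, (∀ j, A j) → ℝ) (aStar : ∀ i, A i)
    (hNE : ∀ (i : Fin N) (a : A i), a ≠ aStar i →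
      u i (Function.update aStar i a) < u i aStar)
    (c : ℝ) (hc : 0 < c)
    (hmargin : IsLeast {d : ℝ | ∃ i : Fin N, ∃ a : A i, a ≠ aStar i ∧
      d = u i aStar - u i (Function.update aStar i a)} (2 * c))
    (r : ℝ) (hr : 0 < r) :
    ∃ M > (0 : ℝ), ∀ y y' y'' : ℝ → ∀ i, A i → ℝ,
      (∀ t ≥ (0 : ℝ), ∀ (i : Fin N) (a : A i), HasDerivAt (fun s => y s i a) (y' t i a) t) →
      (∀ t ≥ (0 : ℝ), ∀ (i : Fin N) (a : A i), HasDerivAt (fun s => y' s i a) (y'' t i a) t) →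
      (∀ t ≥ (0 : ℝ), ∀ (i : Fin N) (a : A i),
        y'' t i a = payVec u i a (fun j => logit (y t j)) - r * y' t i a) →
      (∀ (i : Fin N) (a : A i), y' 0 i a = 0) →
      (∀ (i : Fin N) (a : A i), a ≠ aStar i → y 0 i a - y 0 i (aStar i) < -M) →
      (∀ (i : Fin N) (a : A i),
        Tendsto (fun t => logit (y t i) a) atTop
          (nhds (if a = aStar i then (1 : ℝ) else 0))) ∧
      ∃ C > (0 : ℝ), ∀ t ≥ (0 : ℝ), ∀ (i : Fin N) (a : A i),
        |logit (y t i) a - (if a = aStar i then (1 : ℝ) else 0)| ≤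
          Real.exp (C - (c / r) * t - (c / r ^ 2) * Real.exp (-r * t) + c / r ^ 2) := by
  classical
  obtain ⟨⟨i₀, a₀, ha₀, hval₀⟩, hlb⟩ := hmargin
  haveI hne : Nonempty ((i : Fin N) × A i) := ⟨⟨i₀, aStar i₀⟩⟩
  -- the equilibrium point and payoff differences
  set xstar : ∀ j, A j → ℝ := fun j b => if b = aStar j then (1:ℝ) else 0 with hxstar
  set F : ((i : Fin N) × A i) → (∀ j, A j → ℝ) → ℝ :=
    fun p x => payVec u p.1 p.2 x - payVec u p.1 (aStar p.1) x with hFdef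
  have hFstar : ∀ p : (i : Fin N) × A i, p.2 ≠ aStar p.1 → F p xstar ≤ -(2*c) := by
    intro p hp
    have h1 := hlb ⟨p.1, p.2, hp, rfl⟩
    simp only [hFdef, hxstar, ftxl_payVec_pure, Function.update_eq_self]
    linarith
  -- continuity: choose radii
  have hchoice : ∀ p : (i : Fin N) × A i, ∃ ε > (0:ℝ),
      ∀ x : ∀ j, A j → ℝ, dist x xstar < ε → p.2 ≠ aStar p.1 → F p x ≤ -c := by
    intro p
    by_cases hp : p.2 = aStar p.1
    · exact ⟨1, one_pos, fun x _ h => absurd hp h⟩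
    · have hct : ContinuousAt (F p) xstar :=
        ((ftxl_payVec_cont u p.1 p.2).sub (ftxl_payVec_cont u p.1 (aStar p.1))).continuousAt
      rw [Metric.continuousAt_iff] at hct
      obtain ⟨ε, hε, hball⟩ := hct c hc
      refine ⟨ε, hε, fun x hx _ => ?_⟩
      have h2 := hball hx
      rw [Real.dist_eq, abs_lt] at h2
      have h3 := hFstar p hp
      linarith [h2.2]
  choose εf hεf hFc using hchoice
  set ε : ℝ := Finset.univ.inf' Finset.univ_nonempty εf with hεdef
  have hεpos : 0 < ε := (Finset.lt_inf'_iff _).2 fun p _ => hεf p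
  have hεle : ∀ p, ε ≤ εf p := fun p => Finset.inf'_le _ (Finset.mem_univ p)
  -- counting constant
  set nt : ℕ := ∑ i, Fintype.card (A i) with hntdef
  have hntcard : ∀ j, Fintype.card (A j) ≤ nt := fun j =>
    Finset.single_le_sum (f := fun i => Fintype.card (A i))
      (fun i _ => Nat.zero_le _) (Finset.mem_univ j)
  have hnt1 : 1 ≤ nt := le_trans Fintype.card_pos (hntcard i₀)
  set ntR : ℝ := (nt : ℝ) with hntR
  have hntR1 : (1:ℝ) ≤ ntR := by rw [hntR]; exact_mod_cast hnt1
  have hntRpos : (0:ℝ) < ntR := by linarith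
  -- choice of M
  set M : ℝ := 1 + max 0 (Real.log (ntR / ε)) with hMdef
  have hM : 0 < M := by
    have := le_max_left (0:ℝ) (Real.log (ntR / ε)); rw [hMdef]; linarith
  have hMkey : ntR * Real.exp (-M) < ε := by
    have hL : Real.log (ntR / ε) < M := by
      have := le_max_right (0:ℝ) (Real.log (ntR / ε)); rw [hMdef]; linarith
    have h1 : Real.exp (-M) < Real.exp (-Real.log (ntR / ε)) := by
      apply Real.exp_lt_exp.2; linarith
    have h2 : Real.exp (-Real.log (ntR / ε)) = ε / ntR := by
      rw [Real.exp_neg, Real.exp_log (by positivity)]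
      rw [inv_div]
    calc ntR * Real.exp (-M) < ntR * (ε / ntR) := by
          rw [← h2]; exact (mul_lt_mul_iff_right₀ hntRpos).2 h1
      _ = ε := by field_simp
  refine ⟨M, hM, ?_⟩
  intro y y' y'' hy hy' hode hy0 hinit
  -- score differences
  set z : ((i : Fin N) × A i) → ℝ → ℝ :=
    fun p t => y t p.1 p.2 - y t p.1 (aStar p.1) with hzdef
  set zd : ((i : Fin N) × A i) → ℝ → ℝ :=
    fun p t => y' t p.1 p.2 - y' t p.1 (aStar p.1) with hzddef
  set zdd : ((i : Fin N) × A i) → ℝ → ℝ :=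
    fun p t => y'' t p.1 p.2 - y'' t p.1 (aStar p.1) with hzdddef
  set xf : ℝ → ∀ j, A j → ℝ := fun t j => logit (y t j) with hxfdef
  set g : ((i : Fin N) × A i) → ℝ → ℝ := fun p t => F p (xf t) with hgdef
  have hzd : ∀ p : (i : Fin N) × A i, ∀ t ≥ (0:ℝ), HasDerivAt (z p) (zd p t) t :=
    fun p t ht => (hy t ht p.1 p.2).sub (hy t ht p.1 (aStar p.1))
  have hzdd : ∀ p : (i : Fin N) × A i, ∀ t ≥ (0:ℝ), HasDerivAt (zd p) (zdd p t) t :=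
    fun p t ht => (hy' t ht p.1 p.2).sub (hy' t ht p.1 (aStar p.1))
  have hodez : ∀ p : (i : Fin N) × A i, ∀ t ≥ (0:ℝ), zdd p t = g p t - r * zd p t := by
    intro p t ht
    simp only [hzdddef, hzddef, hgdef, hFdef, hxfdef, hode t ht p.1 p.2,
      hode t ht p.1 (aStar p.1)]
    ring
  have hzd0 : ∀ p : (i : Fin N) × A i, zd p 0 = 0 := by
    intro p; simp only [hzddef, hy0, sub_zero]
  have hinit' : ∀ p : (i : Fin N) × A i, p.2 ≠ aStar p.1 → z p 0 < -M :=
    fun p hp => hinit p.1 p.2 hp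
  -- distance estimate
  have hdist : ∀ t : ℝ, (∀ p : (i : Fin N) × A i, p.2 ≠ aStar p.1 → z p t ≤ -M) →
      ∀ p : (i : Fin N) × A i, p.2 ≠ aStar p.1 → g p t ≤ -c := by
    intro t hzle p hp
    apply hFc p _ _ hp
    have hd : dist (xf t) xstar ≤ ntR * Real.exp (-M) := by
      rw [dist_pi_le_iff (by positivity)]
      intro j
      rw [dist_pi_le_iff (by positivity)]
      intro b
      rw [Real.dist_eq]
      calc |xf t j b - xstar j b|
          ≤ ∑ b' ∈ Finset.univ.erase (aStar j), Real.exp (y t j b' - y t j (aStar j)) :=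
            ftxl_logit_close (y t j) (aStar j) b
        _ ≤ ∑ _b' ∈ Finset.univ.erase (aStar j), Real.exp (-M) := by
            apply Finset.sum_le_sum
            intro b' hb'
            exact Real.exp_le_exp.2 (hzle ⟨j, b'⟩ (Finset.ne_of_mem_erase hb'))
        _ ≤ ntR * Real.exp (-M) := by
            rw [Finset.sum_const, nsmul_eq_mul]
            apply mul_le_mul_of_nonneg_right _ (Real.exp_pos _).le
            calc ((Finset.univ.erase (aStar j)).card : ℝ) ≤ (Fintype.card (A j) : ℝ) := by
                  exact_mod_cast Finset.card_le_card (Finset.erase_subset _ _)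
              _ ≤ ntR := by rw [hntR]; exact_mod_cast hntcard j
    exact lt_of_le_of_lt hd (lt_of_lt_of_le hMkey (hεle p))
  -- the invariance argument
  have hall : ∀ t ≥ (0:ℝ), ∀ p : (i : Fin N) × A i, p.2 ≠ aStar p.1 → z p t < -M := by
    by_contra hcon
    push_neg at hcon
    obtain ⟨t₁, ht₁, p₁, hp₁, hzp₁⟩ := hcon
    set E : Set ℝ := ⋃ p : (i : Fin N) × A i, {t | 0 ≤ t ∧ p.2 ≠ aStar p.1 ∧ -M ≤ z p t}
      with hEdef
    have hEne : E.Nonempty := ⟨t₁, mem_iUnion.2 ⟨p₁, ht₁, hp₁, hzp₁⟩⟩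
    have hEbdd : BddBelow E := ⟨0, fun t htE => (mem_iUnion.1 htE).choose_spec.1⟩
    have hEclosed : IsClosed E := by
      apply isClosed_iUnion_of_finite
      intro p
      by_cases hp : p.2 = aStar p.1
      · convert isClosed_empty using 1
        ext t; simp [hp]
      · have hset : {t | 0 ≤ t ∧ p.2 ≠ aStar p.1 ∧ -M ≤ z p t}
            = Ici (0:ℝ) ∩ (z p) ⁻¹' Ici (-M) := by
          ext t; simp [hp, mem_Ici]
        rw [hset]
        exact ContinuousOn.preimage_isClosed_of_isClosed
          (fun t ht => (hzd p t ht).continuousAt.continuousWithinAt) isClosed_Ici isClosed_Ici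
    set T : ℝ := sInf E with hTdef
    have hTE : T ∈ E := hEclosed.csInf_mem hEne hEbdd
    obtain ⟨phat, hT0, hphat, hMz⟩ :
        ∃ p : (i : Fin N) × A i, 0 ≤ T ∧ p.2 ≠ aStar p.1 ∧ -M ≤ z p T := by
      obtain ⟨p, hp⟩ := mem_iUnion.1 hTE
      exact ⟨p, hp.1, hp.2.1, hp.2.2⟩
    have hTpos : 0 < T := by
      rcases hT0.lt_or_eq with h | h
      · exact h
      · exfalso; rw [← h] at hMz; exact absurd hMz (not_le.2 (hinit' phat hphat))
    have hlt : ∀ s, 0 ≤ s → s < T → ∀ p : (i : Fin N) × A i,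
        p.2 ≠ aStar p.1 → z p s < -M := by
      intro s hs hsT p hp
      by_contra h
      push_neg at h
      exact (notMem_of_lt_csInf hsT hEbdd) (mem_iUnion.2 ⟨p, hs, hp, h⟩)
    have hTle : ∀ p : (i : Fin N) × A i, p.2 ≠ aStar p.1 → z p T ≤ -M := by
      intro p hp
      haveI hneb : (nhdsWithin T (Ioo 0 T)).NeBot := by
        apply mem_closure_iff_nhdsWithin_neBot.1
        rw [closure_Ioo hTpos.ne]
        exact right_mem_Icc.2 hTpos.le
      apply le_of_tendsto ((hzd p T hT0).continuousAt.continuousWithinAt :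
        Tendsto (z p) (nhdsWithin T (Ioo 0 T)) (nhds (z p T)))
      filter_upwards [self_mem_nhdsWithin] with w hw
      exact (hlt w hw.1.le hw.2 p hp).le
    have hleT : ∀ s ∈ Icc (0:ℝ) T, ∀ p : (i : Fin N) × A i,
        p.2 ≠ aStar p.1 → z p s ≤ -M := by
      intro s hs p hp
      rcases lt_or_eq_of_le hs.2 with h | h
      · exact (hlt s hs.1 h p hp).le
      · exact h ▸ hTle p hp
    have hgle : ∀ s ∈ Icc (0:ℝ) T, g phat s ≤ -c :=
      fun s hs => hdist s (fun q hq => hleT s hs q hq) phat hphat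
    have hkey := ftxl_key c r hc hr (z phat) (zd phat) (zdd phat) (g phat)
      (hzd phat) (hzdd phat) (hodez phat) (hzd0 phat) T hT0 hgle T (right_mem_Icc.2 hT0)
    have hexp := Real.add_one_le_exp (-r * T)
    have hR : -(c / r) * T - (c / r ^ 2) * Real.exp (-r * T) + c / r ^ 2 ≤ 0 := by
      have h1 : c / r ^ 2 * (1 - Real.exp (-r * T)) ≤ c / r ^ 2 * (r * T) := by
        apply mul_le_mul_of_nonneg_left (by linarith) (by positivity)
      have h2 : c / r ^ 2 * (r * T) = c / r * T := by
        field_simp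
      linarith
    have hz0 := hinit' phat hphat
    have hcon2 : z phat T < -M := by
      have hgen : ∀ zT z0 m e : ℝ,
          zT ≤ z0 - c / r * T - c / r ^ 2 * e + c / r ^ 2 →
          -(c / r) * T - c / r ^ 2 * e + c / r ^ 2 ≤ 0 → z0 < -m → zT < -m := by
        intro zT z0 m e h1 h2 h3
        linarith
      exact hgen _ _ _ _ hkey hR hz0
    exact absurd hMz (not_le.2 hcon2)
  -- global rate bound
  have hgall : ∀ t ≥ (0:ℝ), ∀ p : (i : Fin N) × A i, p.2 ≠ aStar p.1 → g p t ≤ -c :=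
    fun t ht => hdist t (fun q hq => (hall t ht q hq).le)
  have hzbound : ∀ t ≥ (0:ℝ), ∀ p : (i : Fin N) × A i, p.2 ≠ aStar p.1 →
      z p t ≤ z p 0 - (c / r) * t - (c / r ^ 2) * Real.exp (-r * t) + c / r ^ 2 := by
    intro t ht p hp
    exact ftxl_key c r hc hr (z p) (zd p) (zdd p) (g p)
      (hzd p) (hzdd p) (hodez p) (hzd0 p)
      t ht (fun s hs => hgall s hs.1 p hp) t (right_mem_Icc.2 ht)
  -- the constant C
  set Zsum : ℝ := ∑ p : (i : Fin N) × A i, |z p 0| with hZdef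
  have hZnn : 0 ≤ Zsum := Finset.sum_nonneg fun p _ => abs_nonneg _
  have hZle : ∀ p : (i : Fin N) × A i, z p 0 ≤ Zsum := by
    intro p
    calc z p 0 ≤ |z p 0| := le_abs_self _
      _ ≤ Zsum := Finset.single_le_sum (f := fun q => |z q 0|)
          (fun q _ => abs_nonneg _) (Finset.mem_univ p)
  have hlognn : 0 ≤ Real.log ntR := Real.log_nonneg hntR1
  set C : ℝ := 1 + Real.log ntR + Zsum with hCdef
  have hCpos : 0 < C := by rw [hCdef]; linarith
  -- the main estimate
  have hmain : ∀ t ≥ (0:ℝ), ∀ (i : Fin N) (a : A i),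
      |logit (y t i) a - (if a = aStar i then (1:ℝ) else 0)| ≤
        Real.exp (C - (c / r) * t - (c / r ^ 2) * Real.exp (-r * t) + c / r ^ 2) := by
    intro t ht i a
    have hRt : ∀ b' : A i, b' ≠ aStar i →
        y t i b' - y t i (aStar i) ≤ Zsum - (c / r) * t - (c / r ^ 2) * Real.exp (-r * t)
          + c / r ^ 2 := by
      intro b' hb'
      have := hzbound t ht ⟨i, b'⟩ hb'
      have h2 := hZle ⟨i, b'⟩
      simp only [hzdef] at this h2 ⊢
      linarith
    calc |logit (y t i) a - (if a = aStar i then (1:ℝ) else 0)|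
        ≤ ∑ b' ∈ Finset.univ.erase (aStar i), Real.exp (y t i b' - y t i (aStar i)) :=
          ftxl_logit_close (y t i) (aStar i) a
      _ ≤ ∑ _b' ∈ Finset.univ.erase (aStar i),
            Real.exp (Zsum - (c / r) * t - (c / r ^ 2) * Real.exp (-r * t) + c / r ^ 2) := by
          apply Finset.sum_le_sum
          intro b' hb'
          exact Real.exp_le_exp.2 (hRt b' (Finset.ne_of_mem_erase hb'))
      _ ≤ ntR * Real.exp (Zsum - (c / r) * t - (c / r ^ 2) * Real.exp (-r * t) + c / r ^ 2) := by
          rw [Finset.sum_const, nsmul_eq_mul]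
          apply mul_le_mul_of_nonneg_right _ (Real.exp_pos _).le
          calc ((Finset.univ.erase (aStar i)).card : ℝ) ≤ (Fintype.card (A i) : ℝ) := by
                exact_mod_cast Finset.card_le_card (Finset.erase_subset _ _)
            _ ≤ ntR := by rw [hntR]; exact_mod_cast hntcard i
      _ ≤ Real.exp (C - (c / r) * t - (c / r ^ 2) * Real.exp (-r * t) + c / r ^ 2) := by
          rw [← Real.exp_log hntRpos, ← Real.exp_add]
          apply Real.exp_le_exp.2
          rw [hCdef]
          linarith
  refine ⟨?_, C, hCpos, hmain⟩
  -- convergence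
  intro i a
  have hev : ∀ᶠ t in atTop, ‖logit (y t i) a - (if a = aStar i then (1:ℝ) else 0)‖ ≤
      Real.exp ((C + c / r ^ 2) + -((c / r) * t)) := by
    filter_upwards [eventually_ge_atTop (0:ℝ)] with t ht
    rw [Real.norm_eq_abs]
    refine le_trans (hmain t ht i a) (Real.exp_le_exp.2 ?_)
    have : 0 ≤ (c / r ^ 2) * Real.exp (-r * t) := by positivity
    linarith
  have hlim : Tendsto (fun t : ℝ => Real.exp ((C + c / r ^ 2) + -((c / r) * t)))
      atTop (nhds 0) := by
    apply Real.tendsto_exp_atBot.comp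
    apply tendsto_atBot_add_const_left
    apply tendsto_neg_atTop_atBot.comp
    exact Tendsto.const_mul_atTop (by positivity) tendsto_id
  have h0 : Tendsto (fun t => logit (y t i) a - (if a = aStar i then (1:ℝ) else 0))
      atTop (nhds 0) := squeeze_zero_norm' hev hlim
  have := h0.add_const (if a = aStar i then (1:ℝ) else 0)
  simpa using this
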